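/- Let n ≥ 1 and let H = {w_1, …, w_T} be a set of T distinct vectors spanning ℝ^{n+1}. Let p_1, …, p_T be real numbers with p_1 + ⋯ + p_T = 1. Let W = (w_{i_1}, …, w_{i_n}) be an ordered n-tuple of distinct, linearly independent vectors from H, and write L_n(W) ∩ H = {w_{j_1}, …, w_{j_{q_n^W}}}. Then the sum, over all permutations γ of {1, …, T} satisfying: w_{γ(1)} ∉ L_n(W), γ^{-1}(i_1) < ⋯ < γ^{-1}(i_n), and for every l = 1, …, n, min{ γ^{-1}(j) : w_j ∈ L_l(W) ∩ H } = γ^{-1}(i_{n-l+1}), of the weight p_{γ(1)} / (T−1)!, equals (1 − p_{j_1} − p_{j_2} − ⋯ − p_{j_{q_n^W}}) / (q_n^W · q_{n-1}^W ⋯ q_1^W). -/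
import Mathlib


open scoped Classical

/-- `flagSpan w i l = span {w (i k) : k ≥ l}`.  For `l : Fin n` (0-based) this is the
paper's flag subspace `L_{n-l}(W)`; in particular `flagSpan w i 0` is the full span
`L_n(W) = span (w_{i_1}, …, w_{i_n})` and `flagSpan w i (n-1) = L_1(W) = span (w_{i_n})`. -/
def flagSpan {n T : ℕ} (w : Fin T → (Fin (n + 1) → ℝ)) (i : Fin n → Fin T)
    (l : Fin n) : Submodule ℝ (Fin (n + 1) → ℝ) :=
  Submodule.span ℝ {x | ∃ k : Fin n, l ≤ k ∧ x = w (i k)}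

/-- `flagQ w i l = |L_{n-l}(W) ∩ H|` : the number of indices `j` with `w j` in the
flag subspace `flagSpan w i l`. -/
noncomputable def flagQ {n T : ℕ} (w : Fin T → (Fin (n + 1) → ℝ)) (i : Fin n → Fin T)
    (l : Fin n) : ℕ :=
  Set.ncard {j : Fin T | w j ∈ flagSpan w i l}

section AuxCounting
open Finset

private theorem swap_symm_apply {α : Type*} [DecidableEq α] (a b : α) (γ : Equiv.Perm α) (j : α) :
    (Equiv.swap a b * γ).symm j = γ.symm (Equiv.swap a b j) := by
  simp [Equiv.Perm.mul_def, Equiv.symm_trans_apply]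

private theorem step_lemma {α : Type*} [Fintype α] [DecidableEq α] [LinearOrder α]
    (c : α) (f : α → ℝ) (S : ℕ → Finset α) (a : ℕ → α) (n : ℕ)
    (h1 : ∀ k < n, a k ∈ S k)
    (h2 : ∀ l k, l ≤ k → k < n → S k ⊆ S l)
    (h3 : ∀ l k, l < k → k < n → a l ∉ S k)
    (h4 : ∀ k < n, ∀ x ∈ S k, f x = 0)
    (k : ℕ) (hk : k < n) :
    (∑ γ ∈ univ.filter (fun γ : Equiv.Perm α =>
        ∀ l < k + 1, ∀ j ∈ S l, γ.symm (a l) ≤ γ.symm j), f (γ c)) * ((S k).card : ℝ)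
    = ∑ γ ∈ univ.filter (fun γ : Equiv.Perm α =>
        ∀ l < k, ∀ j ∈ S l, γ.symm (a l) ≤ γ.symm j), f (γ c) := by
  have hak : a k ∈ S k := h1 k hk
  have hSne : (S k).Nonempty := ⟨a k, hak⟩
  -- preservation of f-value under multiplying by a swap of two S k elements
  have hfpres : ∀ (b : α), b ∈ S k → ∀ γ : Equiv.Perm α,
      f ((Equiv.swap (a k) b * γ) c) = f (γ c) := by
    intro b hb γ
    have : (Equiv.swap (a k) b * γ) c = Equiv.swap (a k) b (γ c) := rfl
    rw [this]
    rcases eq_or_ne (γ c) (a k) with h | h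
    · rw [h, Equiv.swap_apply_left, h4 k hk b hb, h4 k hk (a k) hak]
    rcases eq_or_ne (γ c) b with h' | h'
    · rw [h', Equiv.swap_apply_right, h4 k hk b hb, h4 k hk (a k) hak]
    · rw [Equiv.swap_apply_of_ne_of_ne h h']
  -- swap of two S k elements maps S l into S l for l ≤ k
  have hswapS : ∀ (b : α), b ∈ S k → ∀ l ≤ k, ∀ j ∈ S l, Equiv.swap (a k) b j ∈ S l := by
    intro b hb l hl j hj
    rw [Equiv.swap_apply_def]
    split_ifs with h h'
    · exact h2 l k hl hk hb
    · exact h2 l k hl hk hak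
    · exact hj
  -- preservation of the ordering conditions for l < k
  have hcond : ∀ (b : α), b ∈ S k → ∀ γ : Equiv.Perm α, ∀ l < k,
      (∀ j ∈ S l, γ.symm (a l) ≤ γ.symm j) →
      (∀ j ∈ S l, (Equiv.swap (a k) b * γ).symm (a l) ≤ (Equiv.swap (a k) b * γ).symm j) := by
    intro b hb γ l hl hC j hj
    rw [swap_symm_apply, swap_symm_apply]
    have hal : Equiv.swap (a k) b (a l) = a l := by
      apply Equiv.swap_apply_of_ne_of_ne
      · intro h; exact h3 l k hl hk (h ▸ hak)
      · intro h; exact h3 l k hl hk (h ▸ hb)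
    rw [hal]
    exact hC _ (hswapS b hb l (le_of_lt hl) j hj)
  -- the min-position element of S k for a permutation γ
  set bm : Equiv.Perm α → α := fun γ => γ (((S k).image γ.symm).min' (hSne.image _)) with hbm
  have hbm_mem : ∀ γ : Equiv.Perm α, bm γ ∈ S k := by
    intro γ
    obtain ⟨j, hj, hje⟩ := Finset.mem_image.mp (Finset.min'_mem _ ((hSne.image γ.symm)))
    have : bm γ = j := by rw [hbm]; simp only; rw [← hje, Equiv.apply_symm_apply]
    rwa [this]
  have hbm_min : ∀ γ : Equiv.Perm α, ∀ j ∈ S k, γ.symm (bm γ) ≤ γ.symm j := by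
    intro γ j hj
    have : γ.symm (bm γ) = ((S k).image γ.symm).min' (hSne.image _) := by
      rw [hbm]; simp only [Equiv.symm_apply_apply]
    rw [this]
    exact Finset.min'_le _ _ (Finset.mem_image_of_mem _ hj)
  -- if γ.symm b is minimal on S k, then bm γ = b
  have hbm_eq : ∀ γ : Equiv.Perm α, ∀ b ∈ S k, (∀ j ∈ S k, γ.symm b ≤ γ.symm j) → bm γ = b := by
    intro γ b hb hmin
    have h1' : ((S k).image γ.symm).min' (hSne.image _) = γ.symm b := by
      apply le_antisymm
      · exact Finset.min'_le _ _ (Finset.mem_image_of_mem _ hb)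
      · apply Finset.le_min'
        intro y hy
        obtain ⟨j, hj, rfl⟩ := Finset.mem_image.mp hy
        exact hmin j hj
    rw [hbm]; simp only; rw [h1', Equiv.apply_symm_apply]
  rw [Finset.sum_mul]
  have hexp : ∀ γ : Equiv.Perm α, f (γ c) * ((S k).card : ℝ) = ∑ _b ∈ S k, f (γ c) := by
    intro γ; rw [Finset.sum_const, nsmul_eq_mul, mul_comm]
  simp_rw [hexp]
  rw [Finset.sum_sigma']
  refine Finset.sum_bij' (fun x _ => Equiv.swap (a k) x.2 * x.1)
    (fun γ _ => ⟨Equiv.swap (a k) (bm γ) * γ, bm γ⟩) ?_ ?_ ?_ ?_ ?_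
  · -- hi : forward map lands in B k
    rintro ⟨γ, b⟩ hx
    simp only [Finset.mem_sigma, Finset.mem_filter, Finset.mem_univ, true_and] at hx ⊢
    obtain ⟨hγ, hb⟩ := hx
    exact fun l hl => hcond b hb γ l hl (hγ l (Nat.lt_succ_of_lt hl))
  · -- hj : backward map lands in sigma
    intro γ hγ
    simp only [Finset.mem_filter, Finset.mem_univ, true_and] at hγ
    simp only [Finset.mem_sigma, Finset.mem_filter, Finset.mem_univ, true_and]
    refine ⟨?_, hbm_mem γ⟩
    intro l hl
    rcases Nat.lt_succ_iff_lt_or_eq.mp hl with hl' | rfl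
    · exact hcond (bm γ) (hbm_mem γ) γ l hl' (hγ l hl')
    · intro j hj
      rw [swap_symm_apply, swap_symm_apply, Equiv.swap_apply_left]
      exact hbm_min γ _ (hswapS (bm γ) (hbm_mem γ) l le_rfl j hj)
  · -- left inverse
    rintro ⟨γ, b⟩ hx
    simp only [Finset.mem_sigma, Finset.mem_filter, Finset.mem_univ, true_and] at hx
    obtain ⟨hγ, hb⟩ := hx
    have hCk : ∀ j ∈ S k, γ.symm (a k) ≤ γ.symm j := hγ k (Nat.lt_succ_self k)
    have hbmval : bm (Equiv.swap (a k) b * γ) = b := by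
      apply hbm_eq _ b hb
      intro j hj
      rw [swap_symm_apply, swap_symm_apply, Equiv.swap_apply_right]
      exact hCk _ (hswapS b hb k le_rfl j hj)
    simp only [hbmval]
    rw [← mul_assoc, Equiv.swap_mul_self, one_mul]
  · -- right inverse
    intro γ hγ
    simp only
    rw [← mul_assoc, Equiv.swap_mul_self, one_mul]
  · -- values
    rintro ⟨γ, b⟩ hx
    simp only [Finset.mem_sigma, Finset.mem_filter, Finset.mem_univ, true_and] at hx
    exact (hfpres b hx.2 γ).symm

private theorem chain_lemma {α : Type*} [Fintype α] [DecidableEq α] [LinearOrder α]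
    (c : α) (f : α → ℝ) (S : ℕ → Finset α) (a : ℕ → α) (n : ℕ)
    (h1 : ∀ k < n, a k ∈ S k)
    (h2 : ∀ l k, l ≤ k → k < n → S k ⊆ S l)
    (h3 : ∀ l k, l < k → k < n → a l ∉ S k)
    (h4 : ∀ k < n, ∀ x ∈ S k, f x = 0)
    (k : ℕ) (hkn : k ≤ n) :
    (∑ γ ∈ Finset.univ.filter (fun γ : Equiv.Perm α =>
        ∀ l < k, ∀ j ∈ S l, γ.symm (a l) ≤ γ.symm j), f (γ c))
      * ∏ l ∈ Finset.range k, ((S l).card : ℝ)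
    = ∑ γ : Equiv.Perm α, f (γ c) := by
  induction k with
  | zero => simp
  | succ k ih =>
    have hk : k < n := lt_of_lt_of_le (Nat.lt_succ_self k) hkn
    calc (∑ γ ∈ Finset.univ.filter (fun γ : Equiv.Perm α =>
            ∀ l < k + 1, ∀ j ∈ S l, γ.symm (a l) ≤ γ.symm j), f (γ c))
          * ∏ l ∈ Finset.range (k + 1), ((S l).card : ℝ)
        = ((∑ γ ∈ Finset.univ.filter (fun γ : Equiv.Perm α =>
            ∀ l < k + 1, ∀ j ∈ S l, γ.symm (a l) ≤ γ.symm j), f (γ c)) * ((S k).card : ℝ))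
          * ∏ l ∈ Finset.range k, ((S l).card : ℝ) := by
          rw [Finset.prod_range_succ]; ring
      _ = (∑ γ ∈ Finset.univ.filter (fun γ : Equiv.Perm α =>
            ∀ l < k, ∀ j ∈ S l, γ.symm (a l) ≤ γ.symm j), f (γ c))
          * ∏ l ∈ Finset.range k, ((S l).card : ℝ) := by
          rw [step_lemma c f S a n h1 h2 h3 h4 k hk]
      _ = ∑ γ : Equiv.Perm α, f (γ c) := ih (le_of_lt hk)

end AuxCounting

/-- The sum, over all permutations `γ` of `{1, …, T}` satisfying `w_{γ(1)} ∉ L_n(W)`,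
`γ⁻¹(i_1) < ⋯ < γ⁻¹(i_n)`, and (for every `l`) that the minimum of `γ⁻¹(j)` over `j`
with `w j ∈ L_l(W) ∩ H` is attained at `j = i_{n-l+1}`, of the weight `p_{γ(1)} / (T-1)!`,
equals `(1 - Σ_{j : w_j ∈ L_n(W)} p_j) / (q_n^W ⋯ q_1^W)`. -/
theorem weighted_permutation_sum (n T : ℕ) (hn : 1 ≤ n) (hT : 0 < T)
    (w : Fin T → (Fin (n + 1) → ℝ)) (hw : Function.Injective w)
    (hspan : Submodule.span ℝ (Set.range w) = ⊤)
    (p : Fin T → ℝ) (hp : ∑ j : Fin T, p j = 1)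
    (i : Fin n → Fin T) (hli : LinearIndependent ℝ (w ∘ i)) :
    ∑ γ ∈ Finset.univ.filter (fun γ : Equiv.Perm (Fin T) =>
        w (γ ⟨0, hT⟩) ∉ Submodule.span ℝ (Set.range (w ∘ i)) ∧
        (∀ a b : Fin n, a < b → γ.symm (i a) < γ.symm (i b)) ∧
        (∀ l : Fin n, ∀ j : Fin T, w j ∈ flagSpan w i l → γ.symm (i l) ≤ γ.symm j)),
      p (γ ⟨0, hT⟩) / ((T - 1).factorial : ℝ) =
    (1 - ∑ j ∈ Finset.univ.filter
        (fun j : Fin T => w j ∈ Submodule.span ℝ (Set.range (w ∘ i))), p j) /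
      ∏ l : Fin n, (flagQ w i l : ℝ) := by
  obtain ⟨T', rfl⟩ : ∃ T', T = T' + 1 := ⟨T - 1, (Nat.succ_pred_eq_of_pos hT).symm⟩
  have hc0 : (⟨0, hT⟩ : Fin (T' + 1)) = (0 : Fin (T' + 1)) := by
    ext; simp
  set L := Submodule.span ℝ (Set.range (w ∘ i)) with hL
  set S : ℕ → Finset (Fin (T' + 1)) := fun k =>
    Finset.univ.filter (fun j => w j ∈ Submodule.span ℝ
      {x | ∃ m : Fin n, k ≤ (m : ℕ) ∧ x = w (i m)}) with hSdef
  set a : ℕ → Fin (T' + 1) := fun k => if h : k < n then i ⟨k, h⟩ else i ⟨0, hn⟩ with hadef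
  set f : Fin (T' + 1) → ℝ := fun m => if w m ∈ L then 0 else p m with hfdef
  have hinj : Function.Injective i := fun x y hxy => hli.injective (congrArg w hxy)
  have haval : ∀ (l : ℕ) (h : l < n), a l = i ⟨l, h⟩ := fun l h => dif_pos h
  -- the defining set of S k, as an image
  have hsetim : ∀ k : ℕ, {x | ∃ m : Fin n, k ≤ (m : ℕ) ∧ x = w (i m)}
      = (w ∘ i) '' {m : Fin n | k ≤ (m : ℕ)} := by
    intro k
    ext x
    simp only [Set.mem_image, Set.mem_setOf_eq]
    exact ⟨fun ⟨m, hm, he⟩ => ⟨m, hm, he.symm⟩, fun ⟨m, hm, he⟩ => ⟨m, hm, he.symm⟩⟩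
  -- flagSpan equals the span used in S
  have hflag : ∀ l : Fin n, flagSpan w i l
      = Submodule.span ℝ {x | ∃ m : Fin n, (l : ℕ) ≤ (m : ℕ) ∧ x = w (i m)} := by
    intro l
    rfl
  have hSmem : ∀ (l : Fin n) (j : Fin (T' + 1)), j ∈ S (l : ℕ) ↔ w j ∈ flagSpan w i l := by
    intro l j
    rw [hSdef, hflag]
    simp
  -- hypotheses of the chain lemma
  have h1 : ∀ k < n, a k ∈ S k := by
    intro k hk
    rw [haval k hk]
    simp only [hSdef, Finset.mem_filter, Finset.mem_univ, true_and]
    exact Submodule.subset_span ⟨⟨k, hk⟩, le_rfl, rfl⟩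
  have h2 : ∀ l k, l ≤ k → k < n → S k ⊆ S l := by
    intro l k hlk _ j hj
    simp only [hSdef, Finset.mem_filter, Finset.mem_univ, true_and] at hj ⊢
    refine Submodule.span_mono ?_ hj
    rintro x ⟨m, hm, rfl⟩
    exact ⟨m, le_trans hlk hm, rfl⟩
  have h3 : ∀ l k, l < k → k < n → a l ∉ S k := by
    intro l k hlk hk hmem
    have hln : l < n := lt_trans hlk hk
    rw [haval l hln] at hmem
    simp only [hSdef, Finset.mem_filter, Finset.mem_univ, true_and, hsetim k] at hmem
    exact hli.notMem_span_image (by simpa using Nat.not_le_of_lt hlk) hmem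
  have hSL : ∀ k (j : Fin (T' + 1)), j ∈ S k → w j ∈ L := by
    intro k j hj
    simp only [hSdef, Finset.mem_filter, Finset.mem_univ, true_and] at hj
    refine Submodule.span_le.mpr ?_ hj
    rintro x ⟨m, _, rfl⟩
    exact Submodule.subset_span ⟨m, rfl⟩
  have h4 : ∀ k < n, ∀ x ∈ S k, f x = 0 := by
    intro k _ x hx
    rw [hfdef]
    simp only [if_pos (hSL k x hx)]
  -- the filter set in the goal equals a filtered version of B n
  have hsetEq : Finset.univ.filter (fun γ : Equiv.Perm (Fin (T' + 1)) =>
        w (γ ⟨0, hT⟩) ∉ L ∧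
        (∀ a b : Fin n, a < b → γ.symm (i a) < γ.symm (i b)) ∧
        (∀ l : Fin n, ∀ j : Fin (T' + 1), w j ∈ flagSpan w i l → γ.symm (i l) ≤ γ.symm j))
      = (Finset.univ.filter (fun γ : Equiv.Perm (Fin (T' + 1)) =>
          ∀ l < n, ∀ j ∈ S l, γ.symm (a l) ≤ γ.symm j)).filter
          (fun γ => w (γ ⟨0, hT⟩) ∉ L) := by
    ext γ
    simp only [Finset.mem_filter, Finset.mem_univ, true_and]
    constructor
    · rintro ⟨hnot, _, hmin⟩
      refine ⟨?_, hnot⟩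
      intro l hl j hj
      have := hmin ⟨l, hl⟩ j ((hSmem ⟨l, hl⟩ j).mp hj)
      rwa [haval l hl]
    · rintro ⟨hall, hnot⟩
      have hmin : ∀ l : Fin n, ∀ j : Fin (T' + 1),
          w j ∈ flagSpan w i l → γ.symm (i l) ≤ γ.symm j := by
        intro l j hj
        have := hall (l : ℕ) l.isLt j ((hSmem l j).mpr (by simpa [Fin.eta] using hj))
        rwa [haval (l : ℕ) l.isLt, Fin.eta] at this
      refine ⟨hnot, ?_, hmin⟩
      intro u v huv
      have hle : γ.symm (i u) ≤ γ.symm (i v) := by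
        apply hmin u
        exact Submodule.subset_span ⟨v, le_of_lt huv, rfl⟩
      refine lt_of_le_of_ne hle ?_
      intro h
      exact absurd (hinj (γ.symm.injective h)) (ne_of_lt huv)
  -- Claim 1 : the filtered sum equals the f-weighted sum over B n
  have claim1 : (∑ γ ∈ Finset.univ.filter (fun γ : Equiv.Perm (Fin (T' + 1)) =>
        w (γ ⟨0, hT⟩) ∉ L ∧
        (∀ a b : Fin n, a < b → γ.symm (i a) < γ.symm (i b)) ∧
        (∀ l : Fin n, ∀ j : Fin (T' + 1), w j ∈ flagSpan w i l → γ.symm (i l) ≤ γ.symm j)),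
        p (γ ⟨0, hT⟩))
      = ∑ γ ∈ Finset.univ.filter (fun γ : Equiv.Perm (Fin (T' + 1)) =>
          ∀ l < n, ∀ j ∈ S l, γ.symm (a l) ≤ γ.symm j), f (γ 0) := by
    rw [hsetEq, Finset.sum_filter]
    apply Finset.sum_congr rfl
    intro γ _
    rw [hc0, hfdef]
    by_cases h : w (γ (0 : Fin (T' + 1))) ∈ L
    · simp [h]
    · simp [h]
  -- Claim 2 : the chain identity
  have claim2 := chain_lemma (0 : Fin (T' + 1)) f S a n h1 h2 h3 h4 n le_rfl
  -- Claim 3 : total sum over all permutations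
  have claim3 : (∑ γ : Equiv.Perm (Fin (T' + 1)), f (γ 0))
      = (T'.factorial : ℝ) * ∑ m : Fin (T' + 1), f m := by
    calc (∑ γ : Equiv.Perm (Fin (T' + 1)), f (γ 0))
        = ∑ x : Fin (T' + 1) × Equiv.Perm (Fin T'),
            f ((Equiv.Perm.decomposeFin.symm x) 0) :=
          (Equiv.sum_comp Equiv.Perm.decomposeFin.symm
            (fun γ : Equiv.Perm (Fin (T' + 1)) => f (γ 0))).symm
      _ = ∑ x : Fin (T' + 1) × Equiv.Perm (Fin T'), f x.1 := by
          apply Fintype.sum_congr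
          rintro ⟨p0, σ⟩
          rw [Equiv.Perm.decomposeFin_symm_apply_zero]
      _ = (T'.factorial : ℝ) * ∑ m : Fin (T' + 1), f m := by
          rw [Fintype.sum_prod_type, Finset.mul_sum]
          apply Finset.sum_congr rfl
          intro m _
          show ∑ _y : Equiv.Perm (Fin T'), f m = (T'.factorial : ℝ) * f m
          rw [Finset.sum_const, Finset.card_univ, Fintype.card_perm, Fintype.card_fin,
            nsmul_eq_mul, mul_comm]
  -- Claim 4 : sum of f
  have claim4 : (∑ m : Fin (T' + 1), f m)
      = 1 - ∑ j ∈ Finset.univ.filter (fun j : Fin (T' + 1) => w j ∈ L), p j := by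
    have hsplit := Finset.sum_filter_add_sum_filter_not Finset.univ
      (fun j : Fin (T' + 1) => w j ∈ L) p
    have : (∑ m : Fin (T' + 1), f m)
        = ∑ j ∈ Finset.univ.filter (fun j : Fin (T' + 1) => ¬ w j ∈ L), p j := by
      rw [Finset.sum_filter]
      apply Finset.sum_congr rfl
      intro j _
      rw [hfdef]
      by_cases h : w j ∈ L
      · simp [h]
      · simp [h]
    rw [this, ← hp, ← hsplit]
    ring
  -- Claim 5 : the product of flagQ equals the product of cards
  have claim5 : (∏ l : Fin n, (flagQ w i l : ℝ))
      = ∏ l ∈ Finset.range n, ((S l).card : ℝ) := by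
    rw [← Fin.prod_univ_eq_prod_range (fun k => ((S k).card : ℝ))]
    apply Finset.prod_congr rfl
    intro l _
    norm_cast
    have hfe : Finset.univ.filter (fun j => w j ∈ flagSpan w i l) = S (l : ℕ) := by
      ext j
      rw [Finset.mem_filter]
      simp only [Finset.mem_univ, true_and]
      exact (hSmem l j).symm
    rw [flagQ, Set.ncard_eq_toFinset_card', Set.toFinset_setOf, hfe]
  -- final assembly
  rw [← Finset.sum_div, claim1, claim5]
  simp only [Nat.add_sub_cancel]
  have hfact : (0 : ℝ) < (T'.factorial : ℝ) := by
    exact_mod_cast Nat.factorial_pos T'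
  have hQpos : (0 : ℝ) < ∏ l ∈ Finset.range n, ((S l).card : ℝ) := by
    apply Finset.prod_pos
    intro l hl
    exact_mod_cast Finset.card_pos.mpr ⟨a l, h1 l (Finset.mem_range.mp hl)⟩
  rw [div_eq_div_iff hfact.ne' hQpos.ne']
  rw [Finset.filter_congr_decidable] at claim2
  rw [claim2, claim3, claim4]
  ring
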